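/- arXiv:2012.03311 — 3 statements merged into one kernel-verified Lean document; each statement's English description precedes it below -/
import Mathlib

section
/- Let I be an ideal on ℕ, A a (Fin,I)-regular infinite real matrix, and x a bounded real sequence. If σ₁, σ₂ ∈ Σ satisfy σ₁(n) = σ₂(n) for all but finitely many n, and Aσ₁(x) is well defined and I-convergent, then Aσ₂(x) is well defined and I-convergent with the same I-limit. In particular, the set Σ_{x,A}(I) = {σ ∈ Σ : Aσ(x) is well defined and I-convergent} is a tail subset of Σ. -/
open Filter Topology

/-- Characteristic function identifying a subset of ℕ with a point of Cantor space. -/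
noncomputable def chi (S : Set ℕ) : ℕ → Bool := fun n => @decide (n ∈ S) (Classical.dec _)

/-- `I` is an ideal on ℕ: hereditary, closed under finite unions, contains all
finite sets, and does not contain ℕ. -/
structure IsIdeal (I : Set (Set ℕ)) : Prop where
  mem_of_subset : ∀ ⦃S T : Set ℕ⦄, S ⊆ T → T ∈ I → S ∈ I
  union_mem : ∀ ⦃S T : Set ℕ⦄, S ∈ I → T ∈ I → S ∪ T ∈ I
  finite_mem : ∀ ⦃S : Set ℕ⦄, S.Finite → S ∈ I
  univ_not_mem : Set.univ ∉ I

/-- The dual filter of an ideal. -/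
def dualFilter (I : Set (Set ℕ)) : Set (Set ℕ) := {S | Sᶜ ∈ I}

/-- A real sequence is bounded. -/
def Bdd (y : ℕ → ℝ) : Prop := ∃ M : ℝ, ∀ n, |y n| ≤ M

/-- The series ∑ₖ f k converges (its partial sums converge). -/
def SeriesConv (f : ℕ → ℝ) : Prop :=
  ∃ l : ℝ, Tendsto (fun N => ∑ k ∈ Finset.range N, f k) atTop (𝓝 l)

/-- The value of the series ∑ₖ f k (the limit of partial sums, when it exists). -/
noncomputable def seriesSum (f : ℕ → ℝ) : ℝ :=
  limUnder atTop (fun N => ∑ k ∈ Finset.range N, f k)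

/-- All rows of `A` applied to `y` give convergent series: `Ay` is well defined. -/
def RowsConv (A : ℕ → ℕ → ℝ) (y : ℕ → ℝ) : Prop := ∀ n, SeriesConv (fun k => A n k * y k)

/-- The sequence `Ay = (∑ₖ a_{n,k} y_k)ₙ`. -/
noncomputable def matMul (A : ℕ → ℕ → ℝ) (y : ℕ → ℝ) : ℕ → ℝ :=
  fun n => seriesSum (fun k => A n k * y k)

/-- `y` is `I`-convergent to `η`. -/
def IConvTo (I : Set (Set ℕ)) (y : ℕ → ℝ) (η : ℝ) : Prop :=
  ∀ ε : ℝ, 0 < ε → {n | ε < |y n - η|} ∈ I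

/-- `y` is `I`-convergent. -/
def IConv (I : Set (Set ℕ)) (y : ℕ → ℝ) : Prop := ∃ η : ℝ, IConvTo I y η

/-- `A` is a regular matrix: it maps convergent sequences to convergent sequences,
preserving limits. -/
def RegularMatrix (A : ℕ → ℕ → ℝ) : Prop :=
  ∀ (y : ℕ → ℝ) (l : ℝ), Tendsto y atTop (𝓝 l) →
    RowsConv A y ∧ Tendsto (matMul A y) atTop (𝓝 l)

/-- `A` is `(Fin, I)`-regular: it maps bounded convergent sequences to bounded
`I`-convergent sequences, preserving the limit. -/
def FinIRegular (I : Set (Set ℕ)) (A : ℕ → ℕ → ℝ) : Prop :=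
  ∀ y : ℕ → ℝ, Bdd y → ∀ l : ℝ, Tendsto y atTop (𝓝 l) →
    RowsConv A y ∧ Bdd (matMul A y) ∧ IConvTo I (matMul A y) l

/-- `S ⊆ ℕ` has asymptotic density zero. -/
noncomputable def DensityZero (S : Set ℕ) : Prop :=
  Tendsto (fun n : ℕ =>
      (((Finset.range (n + 1)).filter (fun m => @decide (m ∈ S) (Classical.dec _) = true)).card : ℝ) / n)
    atTop (𝓝 0)

/-- `y` is statistically convergent. -/
noncomputable def StatConv (y : ℕ → ℝ) : Prop :=
  ∃ η : ℝ, ∀ ε : ℝ, 0 < ε → DensityZero {n | ε < |y n - η|}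

/-- The ideal Fin × Fin, represented as an ideal on ℕ via the 2-adic valuation. -/
def FinTimesFin : Set (Set ℕ) :=
  {S | ∀ᶠ k in atTop, {n ∈ S | padicValNat 2 n = k}.Finite}

/-- `I` contains an isomorphic copy of `J`. -/
def ContainsIsoCopy (I J : Set (Set ℕ)) : Prop :=
  ∃ ι : ℕ → ℕ, Function.Injective ι ∧ ∀ S : Set ℕ, S ∈ J ↔ ι ⁻¹' S ∈ I

/-- A family of subsets of ℕ is Borel (as a subset of the Cantor space `ℕ → Bool`). -/
def BorelFamily (𝒜 : Set (Set ℕ)) : Prop := @MeasurableSet (ℕ → Bool) (borel (ℕ → Bool)) (chi '' 𝒜)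

/-- A family of subsets of ℕ is meager (as a subset of the Cantor space `ℕ → Bool`). -/
def MeagerFamily (𝒜 : Set (Set ℕ)) : Prop := IsMeagre (chi '' 𝒜)

/-- An F_σ subset of the Cantor space. -/
def IsFSigma (K : Set (ℕ → Bool)) : Prop :=
  ∃ F : ℕ → Set (ℕ → Bool), (∀ n, IsClosed (F n)) ∧ K = ⋃ n, F n

/-- A family of subsets of ℕ is F_{σδ} (as a subset of the Cantor space). -/
def FSigmaDeltaFamily (𝒜 : Set (Set ℕ)) : Prop :=
  ∃ F : ℕ → ℕ → Set (ℕ → Bool), (∀ i j, IsClosed (F i j)) ∧ chi '' 𝒜 = ⋂ i, ⋃ j, F i j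

/-- The space Σ of strictly increasing functions ℕ → ℕ, as a subspace of ℕ^ℕ. -/
abbrev MonoSeq : Type := {σ : ℕ → ℕ // StrictMono σ}

/-- The set Σ_{x,A}(I) of those σ ∈ Σ for which A σ(x) is well defined and I-convergent. -/
noncomputable def SigmaSet (x : ℕ → ℝ) (A : ℕ → ℕ → ℝ) (I : Set (Set ℕ)) : Set MonoSeq :=
  {σ | RowsConv A (fun k => x (σ.1 k)) ∧ IConv I (matMul A (fun k => x (σ.1 k)))}

/-- `I*` is ω-diagonalizable by `I*`-universal sets. -/
def OmegaDiagonalizable (I : Set (Set ℕ)) : Prop :=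
  ∃ F : ℕ → ℕ → Set ℕ,
    (∀ n k, (F n k).Finite ∧ (F n k).Nonempty) ∧
    (∀ n, ∀ A ∈ dualFilter I, ∃ k, F n k ⊆ A) ∧
    (∀ A ∈ dualFilter I, ∃ n m, ∀ k, m < k → (F n k ∩ A).Nonempty)

/-- `y` is `I`-bounded. -/
def IBounded (I : Set (Set ℕ)) (y : ℕ → ℝ) : Prop := ∃ m : ℕ, {n | (m : ℝ) ≤ |y n|} ∈ I

/-- The metric d(σ₁,σ₂) = ∑_{i ∈ Im σ₁ Δ Im σ₂} 2^{-i} on Σ. -/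
noncomputable def dSigma (σ₁ σ₂ : MonoSeq) : ℝ :=
  ∑' i : ℕ, Set.indicator (symmDiff (Set.range σ₁.1) (Set.range σ₂.1)) (fun i => (2 : ℝ)⁻¹ ^ i) i


lemma seriesAdd {f g : ℕ → ℝ} (hf : SeriesConv f) (hg : SeriesConv g) :
    SeriesConv (fun k => f k + g k) ∧
      seriesSum (fun k => f k + g k) = seriesSum f + seriesSum g := by
  obtain ⟨lf, hlf⟩ := hf
  obtain ⟨lg, hlg⟩ := hg
  have h : Tendsto (fun N => ∑ k ∈ Finset.range N, (f k + g k)) atTop (𝓝 (lf + lg)) := by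
    simpa [Finset.sum_add_distrib] using hlf.add hlg
  refine ⟨⟨_, h⟩, ?_⟩
  rw [seriesSum, seriesSum, seriesSum, h.limUnder_eq, hlf.limUnder_eq, hlg.limUnder_eq]

lemma iconvAdd {I : Set (Set ℕ)} (hI : IsIdeal I) {u v : ℕ → ℝ} {η : ℝ}
    (hu : IConvTo I u η) (hv : IConvTo I v 0) :
    IConvTo I (fun n => u n + v n) η := by
  intro ε hε
  have h1 := hu (ε / 2) (by linarith)
  have h2 := hv (ε / 2) (by linarith)
  refine hI.mem_of_subset ?_ (hI.union_mem h1 h2)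
  intro n hn
  simp only [Set.mem_setOf_eq] at hn
  by_contra hc
  simp only [Set.mem_union, Set.mem_setOf_eq, not_or, not_lt, sub_zero] at hc
  have : |u n + v n - η| ≤ ε := by
    calc |u n + v n - η| = |(u n - η) + v n| := by ring_nf
    _ ≤ |u n - η| + |v n| := abs_add_le _ _
    _ ≤ ε / 2 + ε / 2 := add_le_add hc.1 hc.2
    _ = ε := by ring
  linarith

/-- For an ideal `I`, a (Fin,I)-regular matrix `A` and bounded `x`:
if σ₁ and σ₂ agree at all but finitely many coordinates and Aσ₁(x) is well defined and
I-convergent to η, then so is Aσ₂(x); in particular Σ_{x,A}(I) is a tail subset of Σ. -/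
theorem stmt_15 (I : Set (Set ℕ)) (hI : IsIdeal I) (A : ℕ → ℕ → ℝ) (hA : FinIRegular I A)
    (x : ℕ → ℝ) (hxb : Bdd x) :
    (∀ σ₁ σ₂ : MonoSeq, (∀ᶠ n in atTop, σ₁.1 n = σ₂.1 n) → ∀ η : ℝ,
        RowsConv A (fun k => x (σ₁.1 k)) →
        IConvTo I (matMul A (fun k => x (σ₁.1 k))) η →
        RowsConv A (fun k => x (σ₂.1 k)) ∧
          IConvTo I (matMul A (fun k => x (σ₂.1 k))) η) ∧
    (∀ σ₁ σ₂ : MonoSeq, σ₁ ∈ SigmaSet x A I → (∀ᶠ n in atTop, σ₁.1 n = σ₂.1 n) →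
        σ₂ ∈ SigmaSet x A I) := by
  have key : ∀ σ₁ σ₂ : MonoSeq, (∀ᶠ n in atTop, σ₁.1 n = σ₂.1 n) → ∀ η : ℝ,
      RowsConv A (fun k => x (σ₁.1 k)) →
      IConvTo I (matMul A (fun k => x (σ₁.1 k))) η →
      RowsConv A (fun k => x (σ₂.1 k)) ∧
        IConvTo I (matMul A (fun k => x (σ₂.1 k))) η := by
    intro σ₁ σ₂ heq η hr hη
    set z : ℕ → ℝ := fun k => x (σ₂.1 k) - x (σ₁.1 k) with hz
    have hzb : Bdd z := by
      obtain ⟨M, hM⟩ := hxb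
      exact ⟨M + M, fun n => (abs_sub _ _).trans (add_le_add (hM _) (hM _))⟩
    have hztend : Tendsto z atTop (𝓝 0) := by
      refine Tendsto.congr' ?_ (tendsto_const_nhds : Tendsto (fun _ : ℕ => (0:ℝ)) atTop _)
      filter_upwards [heq] with n h
      simp [hz, h]
    obtain ⟨hrz, _, hiz⟩ := hA z hzb 0 hztend
    have hfeq : ∀ n, (fun k => A n k * x (σ₂.1 k)) =
        fun k => A n k * x (σ₁.1 k) + A n k * z k := by
      intro n; funext k; simp only [hz]; ring
    have hr2 : RowsConv A (fun k => x (σ₂.1 k)) := by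
      intro n
      have := (seriesAdd (hr n) (hrz n)).1
      simpa only [SeriesConv, ← hfeq n] using this
    have hmm : matMul A (fun k => x (σ₂.1 k)) =
        fun n => matMul A (fun k => x (σ₁.1 k)) n + matMul A z n := by
      funext n
      show seriesSum (fun k => A n k * x (σ₂.1 k)) = _
      rw [hfeq n]
      exact (seriesAdd (hr n) (hrz n)).2
    refine ⟨hr2, ?_⟩
    rw [hmm]
    exact iconvAdd hI hη hiz
  refine ⟨key, ?_⟩
  rintro σ₁ σ₂ ⟨hr, η, hη⟩ heq
  obtain ⟨hr2, hη2⟩ := key σ₁ σ₂ heq η hr hη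
  exact ⟨hr2, η, hη2⟩
end

section
/- Let I be an ideal on ℕ such that the dual filter I* is ω-diagonalizable by I*-universal sets, and let X be a perfectly normal topological space. Then a function f : X → ℝ is the I-pointwise limit of a sequence of continuous real-valued functions on X if and only if it is the pointwise limit of a sequence of continuous real-valued functions on X (i.e. the I-Baire one class B₁^I(X) equals the Baire one class B₁(X)). -/
open Filter Topology

/-! ### Auxiliary machinery for Statement 18 -/

section Aux

open Set

/-- Fσ subsets of a topological space. -/
def FSig {X : Type*} [TopologicalSpace X] (s : Set X) : Prop :=
  ∃ C : ℕ → Set X, (∀ n, IsClosed (C n)) ∧ s = ⋃ n, C n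

lemma FSig.of_closed {X : Type*} [TopologicalSpace X] {s : Set X} (hs : IsClosed s) : FSig s :=
  ⟨fun _ => s, fun _ => hs, (Set.iUnion_const s).symm⟩

lemma FSig.iUnion_nat {X : Type*} [TopologicalSpace X] {s : ℕ → Set X}
    (h : ∀ i, FSig (s i)) : FSig (⋃ i, s i) := by
  choose C hC hCeq using h
  refine ⟨fun k => C (Nat.unpair k).1 (Nat.unpair k).2, fun k => hC _ _, ?_⟩
  ext x
  simp only [mem_iUnion]
  constructor
  · rintro ⟨i, hx⟩
    rw [hCeq i] at hx
    obtain ⟨n, hn⟩ := mem_iUnion.1 hx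
    exact ⟨Nat.pair i n, by simpa [Nat.unpair_pair] using hn⟩
  · rintro ⟨k, hk⟩
    exact ⟨(Nat.unpair k).1, by rw [hCeq]; exact mem_iUnion.2 ⟨(Nat.unpair k).2, hk⟩⟩

lemma FSig.inter {X : Type*} [TopologicalSpace X] {s t : Set X}
    (hs : FSig s) (ht : FSig t) : FSig (s ∩ t) := by
  obtain ⟨C, hC, rfl⟩ := hs
  obtain ⟨D, hD, rfl⟩ := ht
  refine ⟨fun k => C (Nat.unpair k).1 ∩ D (Nat.unpair k).2,
    fun k => (hC _).inter (hD _), ?_⟩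
  ext x
  simp only [mem_inter_iff, mem_iUnion]
  constructor
  · rintro ⟨⟨i, hi⟩, ⟨j, hj⟩⟩
    exact ⟨Nat.pair i j, by simpa [Nat.unpair_pair] using ⟨hi, hj⟩⟩
  · rintro ⟨k, hk1, hk2⟩
    exact ⟨⟨_, hk1⟩, ⟨_, hk2⟩⟩

lemma FSig.of_open {X : Type*} [TopologicalSpace X] [PerfectlyNormalSpace X]
    {s : Set X} (hs : IsOpen s) : FSig s := by
  obtain ⟨o, ho, hoeq⟩ := (PerfectlyNormalSpace.closed_gdelta hs.isClosed_compl).eq_iInter_nat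
  refine ⟨fun n => (o n)ᶜ, fun n => (ho n).isClosed_compl, ?_⟩
  rw [← compl_compl s, hoeq, compl_iInter]

/-- σ-reduction: a cover of `X` by two Fσ sets can be reduced to
an ambiguous (Fσ and co-Fσ) separator. -/
lemma fsig_reduction {X : Type*} [TopologicalSpace X] [PerfectlyNormalSpace X]
    {U V : Set X} (hU : FSig U) (hV : FSig V) (hcov : U ∪ V = univ) :
    ∃ H : Set X, FSig H ∧ FSig Hᶜ ∧ H ⊆ U ∧ Hᶜ ⊆ V := by
  classical
  obtain ⟨C, hC, hCeq⟩ := hU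
  obtain ⟨D, hD, hDeq⟩ := hV
  set E : ℕ → Set X := fun l => if Even l then C (l / 2) else D (l / 2) with hE
  have hEclosed : ∀ l, IsClosed (E l) := by
    intro l
    by_cases h : Even l <;> simp [hE, h, hC, hD]
  have hex : ∀ x : X, ∃ l, x ∈ E l := by
    intro x
    have : x ∈ U ∪ V := hcov ▸ mem_univ x
    rcases this with h | h
    · rw [hCeq] at h
      obtain ⟨i, hi⟩ := mem_iUnion.1 h
      exact ⟨2 * i, by simp [hE, Nat.mul_div_cancel_left i (by norm_num : 0 < 2), hi]⟩
    · rw [hDeq] at h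
      obtain ⟨i, hi⟩ := mem_iUnion.1 h
      refine ⟨2 * i + 1, ?_⟩
      have : ¬ Even (2 * i + 1) := by simp [parity_simps]
      simp [hE, this, Nat.mul_add_div (by norm_num : 0 < 2), hi]
  set H : Set X := {x | Even (Nat.find (hex x))} with hH
  have hfirst : ∀ l, {x | Nat.find (hex x) = l} = E l \ ⋃ l' ∈ Finset.range l, E l' := by
    intro l
    ext x
    simp only [mem_setOf_eq, mem_diff, mem_iUnion, Finset.mem_range, not_exists]
    constructor
    · rintro rfl
      exact ⟨Nat.find_spec (hex x), fun l' hl' => Nat.find_min (hex x) hl'⟩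
    · rintro ⟨h1, h2⟩
      have hle : Nat.find (hex x) ≤ l := Nat.find_le h1
      rcases lt_or_eq_of_le hle with h | h
      · exact absurd (Nat.find_spec (hex x)) (h2 _ h)
      · exact h
  have hlayer : ∀ l, FSig {x : X | Nat.find (hex x) = l} := by
    intro l
    rw [hfirst l]
    have hopen : IsOpen (⋃ l' ∈ Finset.range l, E l')ᶜ :=
      (Set.Finite.isClosed_biUnion (Finset.finite_toSet _) fun l' _ => hEclosed l').isOpen_compl
    rw [diff_eq]
    exact (FSig.of_closed (hEclosed l)).inter (FSig.of_open hopen)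
  refine ⟨H, ?_, ?_, ?_, ?_⟩
  · have : H = ⋃ i : ℕ, {x : X | Nat.find (hex x) = 2 * i} := by
      ext x
      simp only [hH, mem_setOf_eq, mem_iUnion]
      constructor
      · rintro ⟨i, hi⟩
        exact ⟨i, by omega⟩
      · rintro ⟨i, hi⟩
        exact ⟨i, by omega⟩
    rw [this]
    exact FSig.iUnion_nat fun i => hlayer _
  · have : Hᶜ = ⋃ i : ℕ, {x : X | Nat.find (hex x) = 2 * i + 1} := by
      ext x
      simp only [hH, mem_compl_iff, mem_setOf_eq, mem_iUnion]
      rw [Nat.not_even_iff]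
      constructor
      · intro h
        exact ⟨Nat.find (hex x) / 2, by omega⟩
      · rintro ⟨i, hi⟩
        omega
    rw [this]
    exact FSig.iUnion_nat fun i => hlayer _
  · intro x hx
    have hs := Nat.find_spec (hex x)
    have hev : Even (Nat.find (hex x)) := hx
    have : E (Nat.find (hex x)) = C (Nat.find (hex x) / 2) := by simp [hE, hev]
    rw [this] at hs
    rw [hCeq]
    exact mem_iUnion.2 ⟨_, hs⟩
  · intro x hx
    have hs := Nat.find_spec (hex x)
    have hodd : ¬ Even (Nat.find (hex x)) := hx
    have : E (Nat.find (hex x)) = D (Nat.find (hex x) / 2) := by simp [hE, hodd]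
    rw [this] at hs
    rw [hDeq]
    exact mem_iUnion.2 ⟨_, hs⟩

/-- The indicator of an ambiguous set is a pointwise limit of continuous functions. -/
lemma indicator_baire {X : Type*} [TopologicalSpace X] [NormalSpace X] {H : Set X}
    (hH : FSig H) (hHc : FSig Hᶜ) :
    ∃ w : ℕ → X → ℝ, (∀ i, Continuous (w i)) ∧
      ∀ x, Filter.Tendsto (fun i => w i x) Filter.atTop (nhds (H.indicator (fun _ => (1:ℝ)) x)) := by
  classical
  obtain ⟨C, hC, hCeq⟩ := hH
  obtain ⟨D, hD, hDeq⟩ := hHc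
  have hA : ∀ i : ℕ, IsClosed (⋃ j ∈ Finset.range (i+1), C j) := fun i =>
    Set.Finite.isClosed_biUnion (Finset.finite_toSet _) fun j _ => hC j
  have hB : ∀ i : ℕ, IsClosed (⋃ j ∈ Finset.range (i+1), D j) := fun i =>
    Set.Finite.isClosed_biUnion (Finset.finite_toSet _) fun j _ => hD j
  have hdisj : ∀ i : ℕ,
      Disjoint (⋃ j ∈ Finset.range (i+1), D j) (⋃ j ∈ Finset.range (i+1), C j) := by
    intro i
    have h1 : (⋃ j ∈ Finset.range (i+1), D j) ⊆ Hᶜ := by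
      intro x hx
      obtain ⟨j, _, hj⟩ := mem_iUnion₂.1 hx
      rw [hDeq]; exact mem_iUnion.2 ⟨j, hj⟩
    have h2 : (⋃ j ∈ Finset.range (i+1), C j) ⊆ H := by
      intro x hx
      obtain ⟨j, _, hj⟩ := mem_iUnion₂.1 hx
      rw [hCeq]; exact mem_iUnion.2 ⟨j, hj⟩
    exact Disjoint.mono h1 h2 disjoint_compl_left
  have hury : ∀ i : ℕ, ∃ w : C(X, ℝ), EqOn w 0 (⋃ j ∈ Finset.range (i+1), D j) ∧
      EqOn w 1 (⋃ j ∈ Finset.range (i+1), C j) ∧ ∀ x, w x ∈ Icc (0:ℝ) 1 := fun i =>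
    exists_continuous_zero_one_of_isClosed (hB i) (hA i) (hdisj i)
  choose w hw0 hw1 _ using hury
  refine ⟨fun i x => w i x, fun i => (w i).continuous, ?_⟩
  intro x
  by_cases hx : x ∈ H
  · rw [Set.indicator_of_mem hx]
    rw [hCeq] at hx
    obtain ⟨j, hj⟩ := mem_iUnion.1 hx
    refine Filter.Tendsto.congr' ?_ tendsto_const_nhds
    filter_upwards [Filter.eventually_ge_atTop j] with i hi
    exact (hw1 i (mem_iUnion₂.2 ⟨j, Finset.mem_range.2 (by omega), hj⟩)).symm
  · rw [Set.indicator_of_notMem hx]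
    have hx' : x ∈ Hᶜ := hx
    rw [hDeq] at hx'
    obtain ⟨j, hj⟩ := mem_iUnion.1 hx'
    refine Filter.Tendsto.congr' ?_ tendsto_const_nhds
    filter_upwards [Filter.eventually_ge_atTop j] with i hi
    exact (hw0 i (mem_iUnion₂.2 ⟨j, Finset.mem_range.2 (by omega), hj⟩)).symm

lemma iconv_mem_dual {I : Set (Set ℕ)} (hI : IsIdeal I) {y : ℕ → ℝ} {η : ℝ}
    (hy : IConvTo I y η) {ε : ℝ} (hε : 0 < ε) : {j | |y j - η| ≤ ε} ∈ dualFilter I := by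
  have h1 := hy ε hε
  have h2 : {j | |y j - η| ≤ ε}ᶜ = {n | ε < |y n - η|} := by
    ext j; simp [not_le]
  simpa only [dualFilter, mem_setOf_eq, h2] using h1

lemma dual_diff_finite {I : Set (Set ℕ)} (hI : IsIdeal I) {A S : Set ℕ}
    (hA : A ∈ dualFilter I) (hS : S.Finite) : A \ S ∈ dualFilter I := by
  have h0 : (A \ S)ᶜ = Aᶜ ∪ S := by
    rw [Set.diff_eq, Set.compl_inter, compl_compl]
  simp only [dualFilter, mem_setOf_eq] at *
  rw [h0]
  exact hI.union_mem hA (hI.finite_mem hS)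

lemma row_beyond {I : Set (Set ℕ)} (hI : IsIdeal I) {F : ℕ → ℕ → Set ℕ}
    (hfin : ∀ n k, (F n k).Finite ∧ (F n k).Nonempty)
    (hrow : ∀ n, ∀ A ∈ dualFilter I, ∃ k, F n k ⊆ A)
    (n m : ℕ) {A : Set ℕ} (hA : A ∈ dualFilter I) : ∃ k, m < k ∧ F n k ⊆ A := by
  set S : Set ℕ := ⋃ (k : ℕ) (_ : k ≤ m), F n k with hSdef
  have hSfin : S.Finite := Set.Finite.biUnion (Set.finite_le_nat m) fun k _ => (hfin n k).1
  obtain ⟨k, hk⟩ := hrow n _ (dual_diff_finite hI hA hSfin)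
  refine ⟨k, ?_, hk.trans Set.diff_subset⟩
  by_contra h
  push_neg at h
  obtain ⟨j, hj⟩ := (hfin n k).2
  exact (hk hj).2 (Set.mem_biUnion h hj)

/-- Under the diagonalization hypothesis, superlevel sets of an I-pointwise limit
of continuous functions are Fσ. -/
lemma fsig_gt {I : Set (Set ℕ)} (hI : IsIdeal I) {F : ℕ → ℕ → Set ℕ}
    (hfin : ∀ n k, (F n k).Finite ∧ (F n k).Nonempty)
    (hrow : ∀ n, ∀ A ∈ dualFilter I, ∃ k, F n k ⊆ A)
    (hdia : ∀ A ∈ dualFilter I, ∃ n m, ∀ k, m < k → (F n k ∩ A).Nonempty)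
    {X : Type*} [TopologicalSpace X] {g : ℕ → X → ℝ} (hg : ∀ n, Continuous (g n))
    {f : X → ℝ} (hconv : ∀ x, IConvTo I (fun n => g n x) (f x)) (a : ℝ) :
    FSig {x | a < f x} := by
  set ε : ℕ → ℝ := fun p => 1 / (3 * ((p : ℝ) + 1)) with hεdef
  have hεpos : ∀ p, 0 < ε p := by
    intro p
    apply div_pos one_pos
    positivity
  set C : ℕ → ℕ → ℕ → Set X := fun p n m =>
    {x | ∀ k, m < k → ∃ j ∈ F n k, a + 2 * ε p ≤ g j x} with hCdef
  have hCclosed : ∀ p n m, IsClosed (C p n m) := by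
    intro p n m
    have heq : C p n m = ⋂ k, {x | m < k → x ∈ ⋃ j ∈ F n k, {x' | a + 2 * ε p ≤ g j x'}} := by
      ext x
      simp only [hCdef, mem_setOf_eq, mem_iInter, mem_iUnion, exists_prop]
    rw [heq]
    refine isClosed_iInter fun k => ?_
    by_cases h : m < k
    · simp only [h, true_implies]
      exact Set.Finite.isClosed_biUnion (hfin n k).1 fun j _ =>
        isClosed_le continuous_const (hg j)
    · simp only [h, false_implies, setOf_true]
      exact isClosed_univ
  have hmain : {x | a < f x} = ⋃ p, ⋃ n, ⋃ m, C p n m := by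
    ext x
    simp only [mem_setOf_eq, mem_iUnion]
    constructor
    · intro hx
      obtain ⟨p, hp⟩ := exists_nat_one_div_lt (show (0:ℝ) < f x - a by linarith)
      have hq : a + 3 * ε p ≤ f x := by
        have h3 : 3 * ε p = 1 / ((p:ℝ) + 1) := by
          rw [hεdef]
          field_simp
        rw [h3]
        linarith
      obtain ⟨n, m, hnm⟩ := hdia _ (iconv_mem_dual hI (hconv x) (hεpos p))
      refine ⟨p, n, m, fun k hk => ?_⟩
      obtain ⟨j, hjF, hjA⟩ := hnm k hk
      refine ⟨j, hjF, ?_⟩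
      simp only [mem_setOf_eq] at hjA
      have habs : |g j x - f x| ≤ ε p := hjA
      have h1 : f x - ε p ≤ g j x := by
        have h2 := abs_le.1 habs
        linarith [h2.1]
      linarith
    · rintro ⟨p, n, m, hx⟩
      by_contra hfa
      push_neg at hfa
      obtain ⟨k, hkm, hkA⟩ := row_beyond hI hfin hrow n m
        (iconv_mem_dual hI (hconv x) (hεpos p))
      obtain ⟨j, hjF, hjval⟩ := hx k hkm
      have hjA : |g j x - f x| ≤ ε p := hkA hjF
      have h1 : g j x ≤ f x + ε p := by
        have h2 := abs_le.1 hjA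
        linarith [h2.2]
      have := hεpos p
      linarith
  rw [hmain]
  exact FSig.iUnion_nat fun p => FSig.iUnion_nat fun n => FSig.iUnion_nat fun m =>
    FSig.of_closed (hCclosed p n m)

lemma iconv_comp {I : Set (Set ℕ)} (hI : IsIdeal I) {y : ℕ → ℝ} {η : ℝ}
    (hy : IConvTo I y η) {φ : ℝ → ℝ} (hφ : Continuous φ) :
    IConvTo I (fun n => φ (y n)) (φ η) := by
  intro ε hε
  obtain ⟨δ, hδ, hcont⟩ := Metric.continuous_iff.1 hφ η ε hε
  refine hI.mem_of_subset ?_ (hy (δ/2) (by linarith))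
  intro n hn
  simp only [Set.mem_setOf_eq] at hn ⊢
  by_contra hc
  push_neg at hc
  have h1 : dist (y n) η < δ := by
    rw [Real.dist_eq]; linarith
  have h2 := hcont (y n) h1
  rw [Real.dist_eq] at h2
  linarith

lemma phi_inv (t : ℝ) : (t / (1 + |t|)) / (1 - |t / (1 + |t|)|) = t := by
  have h1 : (0:ℝ) < 1 + |t| := by positivity
  rw [abs_div, abs_of_pos h1]
  have h2 : 1 - |t| / (1 + |t|) = 1 / (1 + |t|) := by
    field_simp
    ring
  rw [h2, div_eq_iff (by positivity : (1:ℝ)/(1+|t|) ≠ 0)]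
  ring

/-- The key Lebesgue–Hausdorff style construction: a bounded function whose strict
sub/super-level sets are all Fσ is a pointwise limit of continuous functions. -/
lemma baire_of_fsig {X : Type*} [TopologicalSpace X] [PerfectlyNormalSpace X] {f : X → ℝ}
    (hb : ∀ x, |f x| < 1)
    (hgt : ∀ a : ℝ, FSig {x | a < f x}) (hlt : ∀ b : ℝ, FSig {x | f x < b}) :
    ∃ h : ℕ → X → ℝ, (∀ i, Continuous (h i)) ∧
      ∀ x, Filter.Tendsto (fun i => h i x) Filter.atTop (nhds (f x)) := by
  classical
  -- Step 1: ambiguous separators with approximating continuous sequences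
  have claim : ∀ a b : ℝ, a < b → ∃ (H : Set X) (w : ℕ → X → ℝ),
      {x | b ≤ f x} ⊆ H ∧ H ⊆ {x | a < f x} ∧ (∀ i, Continuous (w i)) ∧
      ∀ x, Filter.Tendsto (fun i => w i x) Filter.atTop
        (nhds (H.indicator (fun _ => (1:ℝ)) x)) := by
    intro a b hab
    have hcov : {x | a < f x} ∪ {x | f x < b} = univ := by
      ext x
      simp only [mem_union, mem_setOf_eq, mem_univ, iff_true]
      by_cases hx : a < f x
      · exact Or.inl hx
      · exact Or.inr (lt_of_le_of_lt (not_lt.1 hx) hab)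
    obtain ⟨H, hH, hHc, hHU, hHV⟩ := fsig_reduction (hgt a) (hlt b) hcov
    obtain ⟨w, hwc, hwt⟩ := indicator_baire hH hHc
    refine ⟨H, w, ?_, hHU, hwc, hwt⟩
    intro x hx
    by_contra hxc
    have := hHV hxc
    simp only [mem_setOf_eq] at this hx
    linarith
  -- Step 2: for each N and j, a separator between consecutive grid levels
  have claim2 : ∀ N j : ℕ, ∃ (H : Set X) (w : ℕ → X → ℝ),
      {x | -1 + 2*((j:ℝ)+1)/((N:ℝ)+1) ≤ f x} ⊆ H ∧
      H ⊆ {x | -1 + 2*(j:ℝ)/((N:ℝ)+1) < f x} ∧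
      (∀ i, Continuous (w i)) ∧
      ∀ x, Filter.Tendsto (fun i => w i x) Filter.atTop
        (nhds (H.indicator (fun _ => (1:ℝ)) x)) := by
    intro N j
    refine claim _ _ ?_
    have hN : (0:ℝ) < (N:ℝ)+1 := by positivity
    have hj : 2*(j:ℝ) < 2*((j:ℝ)+1) := by linarith
    have := (div_lt_div_iff_of_pos_right hN).2 hj
    linarith
  choose Hs w hsub1 hsub2 hwc hwt using claim2
  -- Step 3: the grid approximants
  set s : ℕ → X → ℝ := fun N x =>
    -1 + (2/((N:ℝ)+1)) * (((Finset.range (N+1)).filter (fun j => x ∈ Hs N j)).card : ℝ)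
    with hsdef
  have hgrid : ∀ N x, |s N x - f x| ≤ 4/((N:ℝ)+1) := by
    intro N x
    have hn1 : (0:ℝ) < (N:ℝ)+1 := by positivity
    set t := f x with htdef
    have ht1 : -1 < t := (abs_lt.1 (hb x)).1
    have ht2 : t < 1 := (abs_lt.1 (hb x)).2
    set B : ℝ := ((N:ℝ)+1)*(t+1)/2 with hBdef
    have hB0 : 0 ≤ B := by
      rw [hBdef]
      apply div_nonneg (mul_nonneg (le_of_lt hn1) (by linarith)) (by norm_num)
    set cnt := ((Finset.range (N+1)).filter (fun j => x ∈ Hs N j)).card with hcntdef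
    have hkey : (2/((N:ℝ)+1)) * B = t + 1 := by
      rw [hBdef]
      field_simp
    have h2n1 : (0:ℝ) < 2/((N:ℝ)+1) := by positivity
    -- upper bound on the count
    have hmemB : ∀ j ∈ (Finset.range (N+1)).filter (fun j => x ∈ Hs N j), (j:ℝ) < B := by
      intro j hj
      rw [Finset.mem_filter] at hj
      have h2 := hsub2 N j hj.2
      simp only [mem_setOf_eq] at h2
      have h3 : 2*(j:ℝ)/((N:ℝ)+1) < t + 1 := by linarith
      have h4 : 2*(j:ℝ) < (t+1) * ((N:ℝ)+1) := (div_lt_iff₀ hn1).1 h3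
      rw [hBdef]; linarith
    have hcntup : (cnt:ℝ) ≤ B + 1 := by
      have hsubf : (Finset.range (N+1)).filter (fun j => x ∈ Hs N j)
          ⊆ Finset.range (⌊B⌋₊ + 1) := by
        intro j hj
        exact Finset.mem_range.2 (Nat.lt_succ_of_le (Nat.le_floor (le_of_lt (hmemB j hj))))
      have h5 : cnt ≤ ⌊B⌋₊ + 1 := by
        have := Finset.card_le_card hsubf
        rwa [Finset.card_range] at this
      have h6 : ((⌊B⌋₊:ℕ):ℝ) ≤ B := Nat.floor_le hB0
      have h7 : (cnt:ℝ) ≤ ((⌊B⌋₊:ℕ):ℝ) + 1 := by exact_mod_cast h5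
      linarith
    have hup : s N x ≤ t + 4/((N:ℝ)+1) := by
      have hmul := mul_le_mul_of_nonneg_left hcntup (le_of_lt h2n1)
      have hdist : (2/((N:ℝ)+1))*(B+1) = (t+1) + 2/((N:ℝ)+1) := by
        rw [mul_add, hkey, mul_one]
      simp only [hsdef]
      have h8 : 4/((N:ℝ)+1) = 2 * (2/((N:ℝ)+1)) := by ring
      rw [h8]
      linarith
    have hlo : t - 4/((N:ℝ)+1) ≤ s N x := by
      by_cases hBsmall : B ≤ 1
      · have h7 : t + 1 ≤ 2/((N:ℝ)+1) := by
          rw [le_div_iff₀ hn1]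
          rw [hBdef] at hBsmall
          nlinarith
        have hcnt0 : (0:ℝ) ≤ (2/((N:ℝ)+1)) * (cnt:ℝ) := by positivity
        have h8 : 4/((N:ℝ)+1) = 2 * (2/((N:ℝ)+1)) := by ring
        simp only [hsdef]
        rw [h8]
        linarith
      · push_neg at hBsmall
        have hB1 : (0:ℝ) ≤ B - 1 := by linarith
        have hsubf2 : Finset.range (⌊B - 1⌋₊ + 1)
            ⊆ (Finset.range (N+1)).filter (fun j => x ∈ Hs N j) := by
          intro j hj
          rw [Finset.mem_range] at hj
          have hjle : (j:ℝ) ≤ B - 1 := by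
            have h9 : j ≤ ⌊B-1⌋₊ := Nat.lt_succ_iff.1 hj
            have h10 : ((j:ℕ):ℝ) ≤ ((⌊B-1⌋₊:ℕ):ℝ) := by exact_mod_cast h9
            have h11 : ((⌊B-1⌋₊:ℕ):ℝ) ≤ B - 1 := Nat.floor_le hB1
            linarith
          have hBn1 : B < (N:ℝ)+1 := by
            rw [hBdef]
            nlinarith
          rw [Finset.mem_filter]
          constructor
          · rw [Finset.mem_range]
            have h12 : (j:ℝ) < (N:ℝ) + 1 := by linarith
            exact_mod_cast h12
          · apply hsub1 N j
            simp only [mem_setOf_eq]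
            have h8 : (j:ℝ) + 1 ≤ B := by linarith
            have h9 : 2*((j:ℝ)+1) ≤ ((N:ℝ)+1)*(t+1) := by
              rw [hBdef] at h8; linarith
            have h10 : 2*((j:ℝ)+1)/((N:ℝ)+1) ≤ t+1 := by
              rw [div_le_iff₀ hn1]; linarith
            linarith
        have hcntlow : B - 1 < (cnt:ℝ) := by
          have h5 : ⌊B-1⌋₊ + 1 ≤ cnt := by
            have := Finset.card_le_card hsubf2
            rwa [Finset.card_range] at this
          have h6 : B - 1 < ((⌊B-1⌋₊:ℕ):ℝ) + 1 := Nat.lt_floor_add_one (B-1)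
          have h7 : ((⌊B-1⌋₊:ℕ):ℝ) + 1 ≤ (cnt:ℝ) := by exact_mod_cast h5
          linarith
        have hmul2 := mul_le_mul_of_nonneg_left (le_of_lt hcntlow) (le_of_lt h2n1)
        have hdist2 : (2/((N:ℝ)+1))*(B-1) = (t+1) - 2/((N:ℝ)+1) := by
          rw [mul_sub, hkey, mul_one]
        simp only [hsdef]
        have h8 : 4/((N:ℝ)+1) = 2 * (2/((N:ℝ)+1)) := by ring
        rw [h8]
        linarith
    rw [abs_le]
    constructor <;> linarith
  -- Step 4: continuous approximants of the grid functions
  set ψ : ℕ → ℕ → X → ℝ := fun N i x =>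
    -1 + (2/((N:ℝ)+1)) * ∑ j ∈ Finset.range (N+1), w N j i x with hψdef
  have hψc : ∀ N i, Continuous (fun x => ψ N i x) := by
    intro N i
    have hsum : Continuous (fun x => ∑ j ∈ Finset.range (N+1), w N j i x) :=
      continuous_finset_sum _ fun j _ => hwc N j i
    exact continuous_const.add (continuous_const.mul hsum)
  have hψt : ∀ N x, Filter.Tendsto (fun i => ψ N i x) Filter.atTop (nhds (s N x)) := by
    intro N x
    have hsum : Filter.Tendsto (fun i => ∑ j ∈ Finset.range (N+1), w N j i x) Filter.atTop
        (nhds (∑ j ∈ Finset.range (N+1), (Hs N j).indicator (fun _ => (1:ℝ)) x)) :=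
      tendsto_finset_sum _ fun j _ => hwt N j x
    have hval : ∑ j ∈ Finset.range (N+1), (Hs N j).indicator (fun _ => (1:ℝ)) x
        = (((Finset.range (N+1)).filter (fun j => x ∈ Hs N j)).card : ℝ) := by
      rw [← Finset.sum_boole]
      apply Finset.sum_congr rfl
      intro j _
      by_cases hj : x ∈ Hs N j <;> simp [hj]
    rw [hval] at hsum
    have hfin := Filter.Tendsto.const_add (-1:ℝ)
      (hsum.const_mul (2/((N:ℝ)+1)))
    simpa only [hψdef, hsdef] using hfin
  -- Step 5: assembly via a telescoping series with truncated approximants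
  set γ : ℕ → ℝ := fun p => ((1:ℝ)/2)^p with hγdef
  have hγpos : ∀ p, 0 < γ p := by
    intro p; simp only [hγdef]; positivity
  set Np : ℕ → ℕ := fun p => 2^(p+3) - 1 with hNpdef
  have hNpkey : ∀ p, ((Np p : ℕ):ℝ) + 1 = 2^(p+3) := by
    intro p
    have h1 : (1:ℕ) ≤ 2^(p+3) := Nat.one_le_two_pow
    simp only [hNpdef]
    push_cast [h1]
    ring
  have hbound : ∀ p x, |s (Np p) x - f x| ≤ γ p / 2 := by
    intro p x
    have h1 := hgrid (Np p) x
    have h2 : 4/(((Np p : ℕ):ℝ)+1) = γ p / 2 := by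
      rw [hNpkey p]
      simp only [hγdef]
      have h3 : (2:ℝ)^(p+3) = 2^p * 8 := by rw [pow_add]; norm_num
      rw [h3, div_pow, one_pow]
      rw [div_div]
      rw [div_eq_div_iff (by positivity) (by positivity)]
      ring
    rwa [h2] at h1
  have hγsucc : ∀ p, γ (p+1) ≤ γ p := by
    intro p
    simp only [hγdef]
    rw [pow_succ]
    nlinarith [pow_pos (show (0:ℝ) < 1/2 by norm_num) p]
  have hdbound : ∀ p x, |s (Np (p+1)) x - s (Np p) x| ≤ γ p := by
    intro p x
    have h1 := hbound p x
    have h2 := hbound (p+1) x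
    have h3 := hγsucc p
    have h4 : |s (Np (p+1)) x - s (Np p) x|
        ≤ |s (Np (p+1)) x - f x| + |f x - s (Np p) x| := abs_sub_le _ _ _
    rw [abs_sub_comm (f x)] at h4
    linarith
  set θ : ℕ → ℕ → X → ℝ := fun p i x =>
    max (-(γ p)) (min (ψ (Np (p+1)) i x - ψ (Np p) i x) (γ p)) with hθdef
  have hθc : ∀ p i, Continuous (fun x => θ p i x) := by
    intro p i
    exact continuous_const.max
      (((hψc (Np (p+1)) i).sub (hψc (Np p) i)).min continuous_const)
  have hθt : ∀ p x, Filter.Tendsto (fun i => θ p i x) Filter.atTop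
      (nhds (s (Np (p+1)) x - s (Np p) x)) := by
    intro p x
    have h1 : Filter.Tendsto (fun i => ψ (Np (p+1)) i x - ψ (Np p) i x) Filter.atTop
        (nhds (s (Np (p+1)) x - s (Np p) x)) := (hψt _ x).sub (hψt _ x)
    have h2 := (tendsto_const_nhds (x := (-(γ p))) (f := Filter.atTop (α := ℕ))).max
      (h1.min (tendsto_const_nhds (x := γ p) (f := Filter.atTop (α := ℕ))))
    have h4 := abs_le.1 (hdbound p x)
    have h3 : max (-(γ p)) (min (s (Np (p+1)) x - s (Np p) x) (γ p))
        = s (Np (p+1)) x - s (Np p) x := by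
      rw [min_eq_left h4.2, max_eq_right h4.1]
    rw [h3] at h2
    exact h2
  have hθbd : ∀ p i x, |θ p i x| ≤ γ p := by
    intro p i x
    rw [abs_le]
    constructor
    · exact le_max_left _ _
    · apply max_le
      · linarith [hγpos p]
      · exact min_le_right _ _
  refine ⟨fun i x => ψ (Np 0) i x + ∑ p ∈ Finset.range i, θ p i x, ?_, ?_⟩
  · intro i
    have hsum : Continuous fun x => ∑ p ∈ Finset.range i, θ p i x :=
      continuous_finset_sum _ fun p _ => hθc p i
    exact (hψc (Np 0) i).add hsum
  · intro x
    rw [Metric.tendsto_atTop]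
    intro ε hε
    obtain ⟨P, hP⟩ := exists_pow_lt_of_lt_one (show (0:ℝ) < ε/12 by linarith)
      (show (1:ℝ)/2 < 1 by norm_num)
    have hγPe : γ P < ε/12 := by simp only [hγdef]; exact hP
    set ε' : ℝ := ε/(2*((P:ℝ)+1)) with hε'def
    have hε'pos : 0 < ε' := by simp only [hε'def]; positivity
    obtain ⟨I1, hI1⟩ := Metric.tendsto_atTop.1 (hψt (Np 0) x) ε' hε'pos
    have hIpex : ∀ p, ∃ Ip, ∀ i ≥ Ip,
        dist (θ p i x) (s (Np (p+1)) x - s (Np p) x) < ε' :=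
      fun p => Metric.tendsto_atTop.1 (hθt p x) ε' hε'pos
    choose Ip hIp2 using hIpex
    set I2 := (Finset.range P).sup Ip with hI2def
    refine ⟨max (max I1 I2) P, fun i hi => ?_⟩
    have hiP : P ≤ i := le_trans (le_max_right _ _) hi
    have hiI1 : I1 ≤ i := le_trans (le_trans (le_max_left _ _) (le_max_left _ _)) hi
    have hiI2 : I2 ≤ i := le_trans (le_trans (le_max_right _ _) (le_max_left _ _)) hi
    have htel : ∑ p ∈ Finset.range i, (s (Np (p+1)) x - s (Np p) x)
        = s (Np i) x - s (Np 0) x := Finset.sum_range_sub (fun p => s (Np p) x) i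
    have hsplit : ∑ p ∈ Finset.range i, (θ p i x - (s (Np (p+1)) x - s (Np p) x))
        = (∑ p ∈ Finset.range P, (θ p i x - (s (Np (p+1)) x - s (Np p) x)))
          + ∑ p ∈ Finset.Ico P i, (θ p i x - (s (Np (p+1)) x - s (Np p) x)) := by
      rw [Finset.range_eq_Ico, ← Finset.sum_Ico_consecutive _ (Nat.zero_le P) hiP,
        ← Finset.range_eq_Ico]
    have hterm1 : |ψ (Np 0) i x - s (Np 0) x| < ε' := by
      have := hI1 i hiI1
      rwa [Real.dist_eq] at this
    have hsum2 : |∑ p ∈ Finset.range P, (θ p i x - (s (Np (p+1)) x - s (Np p) x))|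
        ≤ (P:ℝ) * ε' := by
      have hterm2 : ∀ p ∈ Finset.range P,
          |θ p i x - (s (Np (p+1)) x - s (Np p) x)| ≤ ε' := by
        intro p hp
        have hle : Ip p ≤ I2 := Finset.le_sup hp
        have := hIp2 p i (le_trans hle hiI2)
        rw [Real.dist_eq] at this
        linarith
      calc |∑ p ∈ Finset.range P, (θ p i x - (s (Np (p+1)) x - s (Np p) x))|
          ≤ ∑ p ∈ Finset.range P, |θ p i x - (s (Np (p+1)) x - s (Np p) x)| :=
            Finset.abs_sum_le_sum_abs _ _
        _ ≤ ∑ _p ∈ Finset.range P, ε' := Finset.sum_le_sum hterm2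
        _ = (P:ℝ) * ε' := by rw [Finset.sum_const, Finset.card_range, nsmul_eq_mul]
    have htail : |∑ p ∈ Finset.Ico P i, (θ p i x - (s (Np (p+1)) x - s (Np p) x))|
        ≤ 4 * γ P := by
      have hgeo : ∑ p ∈ Finset.Ico P i, γ p ≤ 2 * γ P := by
        rw [Finset.sum_Ico_eq_sum_range]
        simp only [hγdef]
        calc ∑ q ∈ Finset.range (i - P), ((1:ℝ)/2)^(P + q)
            = ((1:ℝ)/2)^P * ∑ q ∈ Finset.range (i - P), ((1:ℝ)/2)^q := by
              rw [Finset.mul_sum]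
              exact Finset.sum_congr rfl fun q _ => pow_add _ _ _
          _ ≤ ((1:ℝ)/2)^P * 2 := by
              apply mul_le_mul_of_nonneg_left (sum_geometric_two_le _) (by positivity)
          _ = 2 * ((1:ℝ)/2)^P := by ring
      calc |∑ p ∈ Finset.Ico P i, (θ p i x - (s (Np (p+1)) x - s (Np p) x))|
          ≤ ∑ p ∈ Finset.Ico P i, |θ p i x - (s (Np (p+1)) x - s (Np p) x)| :=
            Finset.abs_sum_le_sum_abs _ _
        _ ≤ ∑ p ∈ Finset.Ico P i, 2 * γ p := by
            apply Finset.sum_le_sum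
            intro p _
            have h1 := hθbd p i x
            have h2 := hdbound p x
            have h3 : |θ p i x - (s (Np (p+1)) x - s (Np p) x)|
                ≤ |θ p i x| + |s (Np (p+1)) x - s (Np p) x| := by
              have h5 := abs_add_le (θ p i x) (-(s (Np (p+1)) x - s (Np p) x))
              simpa only [sub_eq_add_neg, abs_neg] using h5
            linarith
        _ = 2 * ∑ p ∈ Finset.Ico P i, γ p := by rw [Finset.mul_sum]
        _ ≤ 2 * (2 * γ P) := by linarith [hγpos P]
        _ = 4 * γ P := by ring
    have hlast : |s (Np i) x - f x| ≤ γ P := by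
      have h1 := hbound i x
      have h2 : γ i ≤ γ P := by
        simp only [hγdef]
        exact pow_le_pow_of_le_one (by norm_num) (by norm_num) hiP
      linarith [hγpos i]
    have hdecomp : (ψ (Np 0) i x + ∑ p ∈ Finset.range i, θ p i x) - f x
        = (ψ (Np 0) i x - s (Np 0) x)
          + (∑ p ∈ Finset.range i, (θ p i x - (s (Np (p+1)) x - s (Np p) x)))
          + (s (Np i) x - f x) := by
      rw [Finset.sum_sub_distrib, htel]
      ring
    rw [Real.dist_eq, hdecomp]
    have habsmid : |∑ p ∈ Finset.range i, (θ p i x - (s (Np (p+1)) x - s (Np p) x))|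
        ≤ (P:ℝ)*ε' + 4*γ P := by
      rw [hsplit]
      have := abs_add_le
        (∑ p ∈ Finset.range P, (θ p i x - (s (Np (p+1)) x - s (Np p) x)))
        (∑ p ∈ Finset.Ico P i, (θ p i x - (s (Np (p+1)) x - s (Np p) x)))
      linarith
    have hPe : (P:ℝ) * ε' + ε' ≤ ε / 2 := by
      have hp1 : (0:ℝ) < (P:ℝ)+1 := by positivity
      have heq : (P:ℝ) * ε' + ε' = ε / 2 := by
        simp only [hε'def]
        field_simp
      exact le_of_eq heq
    calc |(ψ (Np 0) i x - s (Np 0) x)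
          + (∑ p ∈ Finset.range i, (θ p i x - (s (Np (p+1)) x - s (Np p) x)))
          + (s (Np i) x - f x)|
        ≤ |ψ (Np 0) i x - s (Np 0) x|
          + |∑ p ∈ Finset.range i, (θ p i x - (s (Np (p+1)) x - s (Np p) x))|
          + |s (Np i) x - f x| := abs_add_three _ _ _
      _ ≤ ε' + ((P:ℝ)*ε' + 4*γ P) + γ P := by linarith [hterm1, habsmid, hlast]
      _ < ε := by linarith [hγPe, hPe]

end Aux


/-- If `I*` is ω-diagonalizable by `I*`-universal sets and `X` is a perfectly
normal space, then a function `f : X → ℝ` is an I-pointwise limit of continuous functions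
iff it is a pointwise limit of continuous functions: B₁^I(X) = B₁(X). -/
theorem stmt_18 (I : Set (Set ℕ)) (hI : IsIdeal I) (hdiag : OmegaDiagonalizable I)
    (X : Type*) [TopologicalSpace X] [PerfectlyNormalSpace X] (f : X → ℝ) :
    (∃ g : ℕ → X → ℝ, (∀ n, Continuous (g n)) ∧
        ∀ x : X, IConvTo I (fun n => g n x) (f x)) ↔
    (∃ g : ℕ → X → ℝ, (∀ n, Continuous (g n)) ∧
        ∀ x : X, Tendsto (fun n => g n x) atTop (𝓝 (f x))) := by
  constructor
  · rintro ⟨g, hg, hconv⟩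
    obtain ⟨F, hfin, hrow, hdia⟩ := hdiag
    have hφc : Continuous (fun t : ℝ => t / (1 + |t|)) := by
      apply Continuous.div continuous_id (continuous_const.add continuous_abs)
      intro t; exact (by positivity : (0:ℝ) < 1 + |t|).ne'
    set f' : X → ℝ := fun x => f x / (1 + |f x|) with hf'def
    have hb : ∀ x, |f' x| < 1 := by
      intro x
      simp only [hf'def]
      rw [abs_div, abs_of_pos (by positivity : (0:ℝ) < 1 + |f x|),
        div_lt_one (by positivity)]
      linarith [abs_nonneg (f x)]
    have hgc' : ∀ n, Continuous (fun x => g n x / (1 + |g n x|)) :=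
      fun n => hφc.comp (hg n)
    have hconv' : ∀ x, IConvTo I (fun n => g n x / (1 + |g n x|)) (f' x) :=
      fun x => iconv_comp hI (hconv x) hφc
    have hgt' : ∀ a : ℝ, FSig {x | a < f' x} :=
      fun a => fsig_gt hI hfin hrow hdia hgc' hconv' a
    have hlt' : ∀ b : ℝ, FSig {x | f' x < b} := by
      intro b
      have hgneg : ∀ n, Continuous (fun x => -(g n x / (1 + |g n x|))) :=
        fun n => (hgc' n).neg
      have hconvneg : ∀ x, IConvTo I (fun n => -(g n x / (1 + |g n x|))) (-(f' x)) := by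
        intro x ε hε
        have heq : {n | ε < |-(g n x / (1 + |g n x|)) - -(f' x)|}
            = {n | ε < |g n x / (1 + |g n x|) - f' x|} := by
          ext n
          have h0 : -(g n x / (1 + |g n x|)) - -(f' x) = -((g n x / (1 + |g n x|)) - f' x) := by
            ring
          simp only [Set.mem_setOf_eq, h0, abs_neg]
        rw [heq]
        exact hconv' x ε hε
      have h1 := fsig_gt hI hfin hrow hdia hgneg hconvneg (-b)
      have heq : {x | f' x < b} = {x | -b < -(f' x)} := by
        ext x; simp only [Set.mem_setOf_eq]; constructor <;> intro <;> linarith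
      rw [heq]; exact h1
    obtain ⟨h, hhc, hht⟩ := baire_of_fsig hb hgt' hlt'
    set a : ℕ → ℝ := fun i => 1 - 1 / ((i:ℝ) + 2) with hadef
    have ha0 : ∀ i, 0 ≤ a i ∧ a i < 1 := by
      intro i
      have hipos : (0:ℝ) < (i:ℝ) + 2 := by positivity
      constructor
      · have h2 : (1:ℝ) / ((i:ℝ)+2) ≤ 1 := by
          rw [div_le_one hipos]
          have : (0:ℝ) ≤ (i:ℝ) := Nat.cast_nonneg i
          linarith
        simp only [hadef]; linarith
      · have : (0:ℝ) < 1 / ((i:ℝ)+2) := by positivity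
        simp only [hadef]; linarith
    set h2 : ℕ → X → ℝ := fun i x => max (-(a i)) (min (h i x) (a i)) with hh2def
    have hh2b : ∀ i x, |h2 i x| ≤ a i := by
      intro i x
      rw [abs_le]
      refine ⟨le_max_left _ _, max_le (by linarith [(ha0 i).1]) (min_le_right _ _)⟩
    have hh2c : ∀ i, Continuous (h2 i) :=
      fun i => continuous_const.max ((hhc i).min continuous_const)
    have hh2t : ∀ x, Tendsto (fun i => h2 i x) atTop (𝓝 (f' x)) := by
      intro x
      have hato : Tendsto (fun i : ℕ => ((i:ℝ) + 2)) atTop atTop :=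
        tendsto_atTop_add_const_right _ 2 tendsto_natCast_atTop_atTop
      have hainv : Tendsto (fun i : ℕ => 1 / ((i:ℝ)+2)) atTop (𝓝 0) := by
        simpa [one_div, Pi.inv_def] using hato.inv_tendsto_atTop
      have hat : Tendsto a atTop (𝓝 1) := by
        have h5 := (tendsto_const_nhds (x := (1:ℝ)) (f := atTop (α := ℕ))).sub hainv
        simpa [hadef] using h5
      have hmin : Tendsto (fun i => min (h i x) (a i)) atTop (𝓝 (min (f' x) 1)) :=
        (hht x).min hat
      have hmax : Tendsto (fun i => max (-(a i)) (min (h i x) (a i))) atTop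
          (𝓝 (max (-1) (min (f' x) 1))) := (hat.neg).max hmin
      have habs := abs_lt.1 (hb x)
      have heq1 : max (-1 : ℝ) (min (f' x) 1) = f' x := by
        rw [min_eq_left (le_of_lt habs.2), max_eq_right (le_of_lt habs.1)]
      rw [heq1] at hmax
      exact hmax
    refine ⟨fun i x => h2 i x / (1 - |h2 i x|), ?_, ?_⟩
    · intro i
      have hden : ∀ x, 1 - |h2 i x| ≠ 0 := by
        intro x
        have h3 := hh2b i x
        have h4 := (ha0 i).2
        have h5 : |h2 i x| < 1 := lt_of_le_of_lt h3 h4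
        intro hcontra
        rw [sub_eq_zero] at hcontra
        rw [← hcontra] at h5
        exact lt_irrefl _ h5
      exact (hh2c i).div (continuous_const.sub (hh2c i).abs) hden
    · intro x
      have hlim : Tendsto (fun i => h2 i x / (1 - |h2 i x|)) atTop
          (𝓝 (f' x / (1 - |f' x|))) := by
        refine Tendsto.div (hh2t x) (tendsto_const_nhds.sub (hh2t x).abs) ?_
        have := hb x
        intro hcontra
        rw [sub_eq_zero] at hcontra
        rw [← hcontra] at this
        exact lt_irrefl _ this
      have heq2 : f' x / (1 - |f' x|) = f x := by
        simp only [hf'def]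
        exact phi_inv (f x)
      rwa [heq2] at hlim
  · rintro ⟨g, hg, hc⟩
    refine ⟨g, hg, fun x ε hε => ?_⟩
    obtain ⟨N, hN⟩ := (Metric.tendsto_atTop.1 (hc x)) ε hε
    refine hI.finite_mem (Set.Finite.subset (Set.finite_lt_nat N) ?_)
    intro n hn
    simp only [Set.mem_setOf_eq] at hn ⊢
    by_contra hcon
    push_neg at hcon
    have := hN n hcon
    rw [Real.dist_eq] at this
    linarith
end

section
/- Let I be an ideal on ℕ. Then the following are equivalent: (i) I is meager as a subset of P(ℕ) with the Cantor-space topology; (ii) there exists a strictly increasing function σ : ℕ → ℕ such that every set A ⊆ ℕ containing the interval ℕ ∩ [σ(n), σ(n+1)) for infinitely many n does not belong to I; (iii) there exists a sequence (F_n) of closed subsets of P(ℕ) such that I ⊆ ⋃_n F_n and F_n ∩ Fin* = ∅ for all n, where Fin* is the Fréchet filter of cofinite subsets of ℕ. -/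
open Filter Topology

namespace Stmt19


lemma chi_eq_true {S : Set ℕ} {n : ℕ} : chi S n = true ↔ n ∈ S := by
  simp [chi]

lemma chi_eq_false {S : Set ℕ} {n : ℕ} : chi S n = false ↔ n ∉ S := by
  simp [chi]

/-- Cylinder basis lemma. -/
lemma exists_cylinder_subset {U : Set (ℕ → Bool)} (hU : IsOpen U) {y : ℕ → Bool} (hy : y ∈ U) :
    ∃ b : ℕ, ∀ x : ℕ → Bool, (∀ i, i < b → x i = y i) → x ∈ U := by
  obtain ⟨I, u, hu, hsub⟩ := isOpen_pi_iff.1 hU y hy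
  refine ⟨(I.sup id) + 1, fun x hx => hsub (Set.mem_pi.2 fun a ha => ?_)⟩
  have hax : x a = y a := hx a (Nat.lt_succ_of_le (Finset.le_sup (f := id) (Finset.mem_coe.1 ha)))
  rw [hax]
  exact (hu a (Finset.mem_coe.1 ha)).2

lemma dense_cofinite : Dense (chi '' {S : Set ℕ | Sᶜ.Finite}) := by
  rw [dense_iff_inter_open]
  rintro U hU ⟨y, hy⟩
  obtain ⟨b, hb⟩ := exists_cylinder_subset hU hy
  refine ⟨chi {i | (i < b ∧ y i = true) ∨ b ≤ i}, hb _ fun i hi => ?_, Set.mem_image_of_mem _ ?_⟩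
  · cases h : y i with
    | false =>
      refine chi_eq_false.2 ?_
      rintro (⟨_, h2⟩ | h2)
      · simp [h] at h2
      · omega
    | true => exact chi_eq_true.2 (Or.inl ⟨hi, h⟩)
  · refine Set.Finite.subset (Set.finite_Iio b) fun i hi => ?_
    simp only [Set.mem_compl_iff, Set.mem_setOf_eq, not_or] at hi
    exact Set.mem_Iio.2 (by omega)

lemma isNowhereDense_of_closed_disjoint {F D : Set (ℕ → Bool)} (hF : IsClosed F)
    (hD : Dense D) (hdisj : F ∩ D = ∅) : IsNowhereDense F := by
  rw [hF.isNowhereDense_iff]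
  by_contra h
  obtain ⟨y, hyi, hyD⟩ := hD.exists_mem_open isOpen_interior (Set.nonempty_iff_ne_empty.2 h)
  exact Set.eq_empty_iff_forall_notMem.1 hdisj y ⟨interior_subset hyD, hyi⟩

/-- Union of two closed nowhere dense sets is closed and nowhere dense. -/
lemma closed_nwd_union {X : Type*} [TopologicalSpace X] {A B : Set X}
    (hA : IsClosed A) (hAn : IsNowhereDense A) (hB : IsClosed B) (hBn : IsNowhereDense B) :
    IsClosed (A ∪ B) ∧ IsNowhereDense (A ∪ B) := by
  rw [isClosed_isNowhereDense_iff_compl, Set.compl_union]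
  have hA' := isClosed_isNowhereDense_iff_compl.1 ⟨hA, hAn⟩
  have hB' := isClosed_isNowhereDense_iff_compl.1 ⟨hB, hBn⟩
  exact ⟨hA'.1.inter hB'.1, hA'.2.inter_of_isOpen_left hB'.2 hA'.1⟩

/-- Nowhere-dense step: extend any pattern below `a` to a pattern below `b` avoiding `E`,
with `b` uniform over all patterns. -/
lemma nwd_step {E : Set (ℕ → Bool)} (hcl : IsClosed E) (hnd : IsNowhereDense E) (a : ℕ) :
    ∃ b, a < b ∧ ∀ u : ℕ → Bool, ∃ v : ℕ → Bool,
      (∀ i, i < a → v i = u i) ∧ ∀ x : ℕ → Bool, (∀ i, i < b → x i = v i) → x ∉ E := by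
  classical
  have key : ∀ u : ℕ → Bool, ∃ p : ℕ × (ℕ → Bool),
      (∀ i, i < a → p.2 i = u i) ∧ ∀ x, (∀ i, i < p.1 → x i = p.2 i) → x ∉ E := by
    intro u
    have hint : interior E = ∅ := hcl.isNowhereDense_iff.1 hnd
    set C : Set (ℕ → Bool) := {x | ∀ i, i < a → x i = u i} with hC
    have hCopen : IsOpen C := by
      have : C = ⋂ i ∈ Finset.range a, (fun x : ℕ → Bool => x i) ⁻¹' {u i} := by
        ext x; simp [hC]
      rw [this]
      exact isOpen_biInter_finset fun i _ => (continuous_apply i).isOpen_preimage _ (isOpen_discrete _)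
    have hne : (C \ E).Nonempty := by
      by_contra h
      have hsub : C ⊆ E := Set.diff_eq_empty.1 (Set.not_nonempty_iff_eq_empty.1 h)
      have : C ⊆ interior E := (hCopen.subset_interior_iff).2 hsub
      have hu : u ∈ C := fun i _ => rfl
      rw [hint] at this
      exact this hu
    obtain ⟨y, hyC, hyE⟩ := hne
    obtain ⟨b, hb⟩ := exists_cylinder_subset hcl.isOpen_compl hyE
    exact ⟨⟨max a b, y⟩, fun i hi => hyC i hi,
      fun x hx => hb x fun i hi => hx i (lt_of_lt_of_le hi (le_max_right a b))⟩
  let ext : (Fin a → Bool) → (ℕ → Bool) := fun w i => if h : i < a then w ⟨i, h⟩ else false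
  let B : (Fin a → Bool) → ℕ := fun w => (key (ext w)).choose.1
  refine ⟨a + 1 + Finset.univ.sup B, by omega, fun u => ?_⟩
  set w : Fin a → Bool := fun i => u i with hw
  obtain ⟨hag, havoid⟩ := (key (ext w)).choose_spec
  refine ⟨(key (ext w)).choose.2, fun i hi => by
      rw [hag i hi]; simp [ext, hi, hw],
    fun x hx => havoid x fun i hi => hx i ?_⟩
  have h1 : B w ≤ Finset.univ.sup B := Finset.le_sup (Finset.mem_univ w)
  have h2 : (key (ext w)).choose.1 = B w := rfl
  omega

/-- Compactness step: if a closed set avoids all (characteristic functions of) cofinite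
sets, then it avoids some cylinder of ones. -/
lemma compact_step {E : Set (ℕ → Bool)} (hcl : IsClosed E)
    (hdisj : E ∩ chi '' {S : Set ℕ | Sᶜ.Finite} = ∅) (a : ℕ) :
    ∃ b, a < b ∧ ∀ x : ℕ → Bool, (∀ i, a ≤ i → i < b → x i = true) → x ∉ E := by
  by_contra h
  push_neg at h
  have hcl2 : ∀ (P : ℕ → Prop), IsClosed {x : ℕ → Bool | ∀ i, P i → x i = true} := by
    intro P
    have : {x : ℕ → Bool | ∀ i, P i → x i = true}
        = ⋂ i, ⋂ (_ : P i), (fun x : ℕ → Bool => x i) ⁻¹' {true} := by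
      ext x; simp
    rw [this]
    exact isClosed_iInter fun i => isClosed_iInter fun _ =>
      IsClosed.preimage (continuous_apply i) (isClosed_discrete _)
  set t : ℕ → Set (ℕ → Bool) :=
    fun b => E ∩ {x | ∀ i, (a ≤ i ∧ i < a + 1 + b) → x i = true} with ht
  have htcl : ∀ b, IsClosed (t b) := fun b => hcl.inter (hcl2 _)
  have htne : ∀ b, (t b).Nonempty := by
    intro b
    obtain ⟨x, hx1, hx2⟩ := h (a + 1 + b) (by omega)
    exact ⟨x, hx2, fun i hi => hx1 i hi.1 hi.2⟩
  have htd : ∀ b, t (b + 1) ⊆ t b := by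
    intro b x hx
    exact ⟨hx.1, fun i hi => hx.2 i ⟨hi.1, by omega⟩⟩
  obtain ⟨x, hx⟩ := IsCompact.nonempty_iInter_of_sequence_nonempty_isCompact_isClosed t htd htne
    (htcl 0).isCompact htcl
  simp only [Set.mem_iInter] at hx
  have hxE : x ∈ E := (hx 0).1
  have hxt : ∀ i, a ≤ i → x i = true := by
    intro i hi
    exact (hx (i + 1)).2 i ⟨hi, by omega⟩
  have hxchi : x = chi {n | x n = true} := by
    funext n
    cases hn : x n <;> simp [chi, hn]
  have : x ∈ E ∩ chi '' {S : Set ℕ | Sᶜ.Finite} := by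
    refine ⟨hxE, ⟨{n | x n = true}, ?_, hxchi.symm⟩⟩
    refine Set.Finite.subset (Set.finite_Iio a) fun i hi => ?_
    simp only [Set.mem_compl_iff, Set.mem_setOf_eq] at hi
    refine Set.mem_Iio.2 ?_
    by_contra hia
    exact hi (hxt i (le_of_not_gt hia))
  rw [hdisj] at this
  exact this


lemma two_to_three (I : Set (Set ℕ)) {σ : ℕ → ℕ} (hσ : StrictMono σ)
    (hprop : ∀ S : Set ℕ, (∃ᶠ n in atTop, Set.Ico (σ n) (σ (n + 1)) ⊆ S) → S ∉ I) :
    ∃ F : ℕ → Set (ℕ → Bool), (∀ n, IsClosed (F n)) ∧ (chi '' I ⊆ ⋃ n, F n) ∧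
      ∀ n, F n ∩ chi '' {S : Set ℕ | Sᶜ.Finite} = ∅ := by
  refine ⟨fun N => {x | ∀ m, N ≤ m → ∃ k, σ m ≤ k ∧ k < σ (m + 1) ∧ x k = false}, ?_, ?_, ?_⟩
  · intro N
    show IsClosed {x : ℕ → Bool | ∀ m, N ≤ m → ∃ k, σ m ≤ k ∧ k < σ (m + 1) ∧ x k = false}
    have heq : {x : ℕ → Bool | ∀ m, N ≤ m → ∃ k, σ m ≤ k ∧ k < σ (m + 1) ∧ x k = false}
        = ⋂ m, ⋂ (_ : N ≤ m), ⋃ k ∈ Finset.Ico (σ m) (σ (m + 1)),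
            (fun x : ℕ → Bool => x k) ⁻¹' {false} := by
      ext x
      simp only [Set.mem_setOf_eq, Set.mem_iInter, Set.mem_iUnion, Finset.mem_Ico,
        Set.mem_preimage, Set.mem_singleton_iff]
      constructor
      · intro h m hm; obtain ⟨k, h1, h2, h3⟩ := h m hm; exact ⟨k, ⟨h1, h2⟩, h3⟩
      · intro h m hm; obtain ⟨k, ⟨h1, h2⟩, h3⟩ := h m hm; exact ⟨k, h1, h2, h3⟩
    rw [heq]
    exact isClosed_iInter fun m => isClosed_iInter fun _ =>
      isClosed_biUnion_finset fun k _ =>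
        IsClosed.preimage (continuous_apply k) (isClosed_discrete _)
  · rintro x ⟨S, hS, rfl⟩
    have hnf : ¬ (∃ᶠ n in atTop, Set.Ico (σ n) (σ (n + 1)) ⊆ S) := fun h => hprop S h hS
    rw [Filter.not_frequently] at hnf
    obtain ⟨N, hN⟩ := eventually_atTop.1 hnf
    refine Set.mem_iUnion.2 ⟨N, fun m hm => ?_⟩
    have := hN m hm
    rw [Set.not_subset] at this
    obtain ⟨k, hk1, hk2⟩ := this
    rw [Set.mem_Ico] at hk1
    exact ⟨k, hk1.1, hk1.2, chi_eq_false.2 hk2⟩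
  · intro N
    rw [Set.eq_empty_iff_forall_notMem]
    rintro x ⟨hxF, S, hS, rfl⟩
    obtain ⟨c, hc⟩ := hS.bddAbove
    have hm : N ≤ max N (c + 1) := le_max_left _ _
    obtain ⟨k, hk1, hk2, hk3⟩ := hxF (max N (c + 1)) hm
    have hkS : k ∉ S := chi_eq_false.1 hk3
    have : k ≤ c := hc hkS
    have hσk : max N (c + 1) ≤ σ (max N (c + 1)) := hσ.le_apply
    omega

lemma three_to_one (I : Set (Set ℕ)) {F : ℕ → Set (ℕ → Bool)} (hcl : ∀ n, IsClosed (F n))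
    (hcov : chi '' I ⊆ ⋃ n, F n)
    (hdisj : ∀ n, F n ∩ chi '' {S : Set ℕ | Sᶜ.Finite} = ∅) : MeagerFamily I := by
  rw [MeagerFamily, isMeagre_iff_countable_union_isNowhereDense]
  refine ⟨Set.range F, ?_, Set.countable_range F, by rwa [Set.sUnion_range]⟩
  rintro t ⟨n, rfl⟩
  exact isNowhereDense_of_closed_disjoint (hcl n) dense_cofinite (hdisj n)

lemma three_to_two (I : Set (Set ℕ)) {F : ℕ → Set (ℕ → Bool)} (hcl : ∀ n, IsClosed (F n))
    (hcov : chi '' I ⊆ ⋃ n, F n)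
    (hdisj : ∀ n, F n ∩ chi '' {S : Set ℕ | Sᶜ.Finite} = ∅) :
    ∃ σ : ℕ → ℕ, StrictMono σ ∧ ∀ S : Set ℕ,
      (∃ᶠ n in atTop, Set.Ico (σ n) (σ (n + 1)) ⊆ S) → S ∉ I := by
  classical
  set G : ℕ → Set (ℕ → Bool) := fun n => ⋃ m ∈ Finset.range (n + 1), F m with hG
  have hGcl : ∀ n, IsClosed (G n) := fun n => isClosed_biUnion_finset fun m _ => hcl m
  have hGdisj : ∀ n, G n ∩ chi '' {S : Set ℕ | Sᶜ.Finite} = ∅ := by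
    intro n
    rw [Set.eq_empty_iff_forall_notMem]
    rintro x ⟨hx1, hx2⟩
    simp only [hG, Set.mem_iUnion] at hx1
    obtain ⟨m, _, hm⟩ := hx1
    exact Set.eq_empty_iff_forall_notMem.1 (hdisj m) x ⟨hm, hx2⟩
  have hGmono : ∀ m n, m ≤ n → G m ⊆ G n := by
    intro m n hmn x hx
    simp only [hG, Set.mem_iUnion] at hx ⊢
    obtain ⟨k, hk, hxk⟩ := hx
    exact ⟨k, by simp only [Finset.mem_range] at hk ⊢; omega, hxk⟩
  have hFG : ∀ n, F n ⊆ G n := by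
    intro n x hx
    simp only [hG, Set.mem_iUnion]
    exact ⟨n, by simp, hx⟩
  have hstep : ∀ n a, ∃ b, a < b ∧ ∀ x : ℕ → Bool,
      (∀ i, a ≤ i → i < b → x i = true) → x ∉ G n :=
    fun n a => compact_step (hGcl n) (hGdisj n) a
  set σ : ℕ → ℕ := fun n => Nat.rec 0 (fun n a => (hstep n a).choose) n with hσdef
  have hσs : ∀ n, σ (n + 1) = (hstep n (σ n)).choose := fun n => rfl
  have hσmono : StrictMono σ := by
    apply strictMono_nat_of_lt_succ
    intro n
    rw [hσs n]
    exact (hstep n (σ n)).choose_spec.1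
  refine ⟨σ, hσmono, ?_⟩
  intro S hfreq hSI
  have hx : chi S ∈ ⋃ n, F n := hcov (Set.mem_image_of_mem _ hSI)
  obtain ⟨m, hm⟩ := Set.mem_iUnion.1 hx
  obtain ⟨n, hgood, hnm⟩ := (hfreq.and_eventually (eventually_ge_atTop m)).exists
  have havoid := (hstep n (σ n)).choose_spec.2 (chi S) ?_
  · exact havoid (hGmono m n hnm (hFG m hm))
  · intro i hi1 hi2
    rw [← hσs n] at hi2
    exact chi_eq_true.2 (hgood (Set.mem_Ico.2 ⟨hi1, hi2⟩))


lemma one_to_two (I : Set (Set ℕ)) (hI : IsIdeal I) (hM : MeagerFamily I) :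
    ∃ σ : ℕ → ℕ, StrictMono σ ∧ ∀ S : Set ℕ,
      (∃ᶠ n in atTop, Set.Ico (σ n) (σ (n + 1)) ⊆ S) → S ∉ I := by
  classical
  -- extract a countable closed nwd cover
  have hE : ∃ E : ℕ → Set (ℕ → Bool), (∀ n, IsClosed (E n)) ∧ (∀ n, IsNowhereDense (E n)) ∧
      chi '' I ⊆ ⋃ n, E n := by
    obtain ⟨𝒮, hnwd, hc, hsub⟩ := isMeagre_iff_countable_union_isNowhereDense.1 hM
    obtain ⟨f, hf⟩ := Set.Countable.exists_eq_range (hc.insert ∅)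
      ⟨∅, Set.mem_insert _ _⟩
    refine ⟨fun n => closure (f n), fun n => isClosed_closure, fun n => ?_, ?_⟩
    · have hfn : f n ∈ insert ∅ 𝒮 := hf ▸ Set.mem_range_self n
      show IsNowhereDense (closure (f n))
      rcases hfn with h | h
      · rw [h]; simpa using (isNowhereDense_empty (X := ℕ → Bool)).closure
      · exact (hnwd _ h).closure
    · intro x hx
      obtain ⟨t, ht, hxt⟩ := hsub hx
      have : t ∈ Set.range f := hf ▸ Set.mem_insert_of_mem _ ht
      obtain ⟨n, rfl⟩ := this
      exact Set.mem_iUnion.2 ⟨n, subset_closure hxt⟩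
  obtain ⟨E, hEcl, hEnwd, hEcov⟩ := hE
  -- monotone accumulation
  set G : ℕ → Set (ℕ → Bool) := fun n => Nat.rec (E 0) (fun n t => t ∪ E (n + 1)) n with hGdef
  have hGs : ∀ n, G (n + 1) = G n ∪ E (n + 1) := fun n => rfl
  have hGprop : ∀ n, IsClosed (G n) ∧ IsNowhereDense (G n) := by
    intro n
    induction n with
    | zero => exact ⟨hEcl 0, hEnwd 0⟩
    | succ n ih => rw [hGs n]; exact closed_nwd_union ih.1 ih.2 (hEcl (n + 1)) (hEnwd (n + 1))
  have hGmono : ∀ m n, m ≤ n → G m ⊆ G n := by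
    intro m n hmn
    induction n, hmn using Nat.le_induction with
    | base => exact subset_rfl
    | succ n hmn ih => rw [hGs n]; exact ih.trans Set.subset_union_left
  have hEG : ∀ n, E n ⊆ G n := by
    intro n
    cases n with
    | zero => exact subset_rfl
    | succ n => rw [hGs n]; exact Set.subset_union_right
  -- the steps
  have hstep : ∀ n a, ∃ b, a < b ∧ ∀ u : ℕ → Bool, ∃ v : ℕ → Bool,
      (∀ i, i < a → v i = u i) ∧ ∀ x : ℕ → Bool, (∀ i, i < b → x i = v i) → x ∉ G n :=
    fun n a => nwd_step (hGprop n).1 (hGprop n).2 a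
  set σ : ℕ → ℕ := fun n => Nat.rec 0 (fun n a => (hstep n a).choose) n with hσdef
  have hσs : ∀ n, σ (n + 1) = (hstep n (σ n)).choose := fun n => rfl
  have hσmono : StrictMono σ := by
    apply strictMono_nat_of_lt_succ
    intro n
    rw [hσs n]
    exact (hstep n (σ n)).choose_spec.1
  refine ⟨σ, hσmono, ?_⟩
  intro S hfreq hSI
  -- the chosen patterns
  set vf : (n : ℕ) → (ℕ → Bool) → (ℕ → Bool) :=
    fun n u => ((hstep n (σ n)).choose_spec.2 u).choose with hvf
  have hvf_agree : ∀ n u, ∀ i, i < σ n → vf n u i = u i :=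
    fun n u => ((hstep n (σ n)).choose_spec.2 u).choose_spec.1
  have hvf_avoid : ∀ n u, ∀ x : ℕ → Bool, (∀ i, i < σ (n + 1) → x i = vf n u i) → x ∉ G n := by
    intro n u
    rw [hσs n]
    exact ((hstep n (σ n)).choose_spec.2 u).choose_spec.2
  -- the modified point
  set y : ℕ → (ℕ → Bool) := fun n => Nat.rec (chi S)
    (fun n xp i =>
      if σ n ≤ i ∧ i < σ (n + 1) ∧ Set.Ico (σ n) (σ (n + 1)) ⊆ S then vf n xp i else xp i) n
    with hydef
  have hys : ∀ n, y (n + 1) = fun i =>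
      if σ n ≤ i ∧ i < σ (n + 1) ∧ Set.Ico (σ n) (σ (n + 1)) ⊆ S then vf n (y n) i else y n i :=
    fun n => rfl
  have hstab : ∀ n i, i < σ n → y (n + 1) i = y n i := by
    intro n i hi
    rw [hys n]
    simp only
    rw [if_neg]
    rintro ⟨h1, -⟩
    omega
  have hstab2 : ∀ n m, n ≤ m → ∀ i, i < σ n → y m i = y n i := by
    intro n m hnm
    induction m, hnm using Nat.le_induction with
    | base => exact fun i _ => rfl
    | succ m hm ih =>
      intro i hi
      rw [hstab m i (lt_of_lt_of_le hi (hσmono.monotone hm)), ih i hi]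
  set x' : ℕ → Bool := fun i => y (i + 1) i with hx'def
  have hagree : ∀ n i, i < σ n → x' i = y n i := by
    intro n i hi
    rcases le_total (i + 1) n with h | h
    · exact (hstab2 (i + 1) n h i (lt_of_lt_of_le (Nat.lt_succ_self i) hσmono.le_apply)).symm
    · exact hstab2 n (i + 1) h i hi
  -- x' is below chi S
  have hbelow : ∀ n i, y n i = true → chi S i = true := by
    intro n
    induction n with
    | zero => exact fun i h => h
    | succ n ih =>
      intro i h
      rw [hys n] at h
      simp only at h
      by_cases hc : σ n ≤ i ∧ i < σ (n + 1) ∧ Set.Ico (σ n) (σ (n + 1)) ⊆ S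
      · exact chi_eq_true.2 (hc.2.2 (Set.mem_Ico.2 ⟨hc.1, hc.2.1⟩))
      · rw [if_neg hc] at h; exact ih i h
  set S' : Set ℕ := {i | x' i = true} with hS'def
  have hS'sub : S' ⊆ S := fun i hi => chi_eq_true.1 (hbelow (i + 1) i hi)
  have hS'I : S' ∈ I := hI.mem_of_subset hS'sub hSI
  have hchiS' : chi S' = x' := by
    funext i
    cases h : x' i <;> simp [chi, hS'def, h]
  -- x' lies in some G m
  have hx'mem : x' ∈ ⋃ n, E n := by
    rw [← hchiS']
    exact hEcov (Set.mem_image_of_mem _ hS'I)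
  obtain ⟨m, hm⟩ := Set.mem_iUnion.1 hx'mem
  have hx'Gm : x' ∈ G m := hEG m hm
  -- pick a good n ≥ m and derive a contradiction
  obtain ⟨n, hgood, hnm⟩ := (hfreq.and_eventually (eventually_ge_atTop m)).exists
  have hx'notGn : x' ∉ G n := by
    apply hvf_avoid n (y n)
    intro i hi
    rw [hagree (n + 1) i hi, hys n]
    simp only
    by_cases hc : σ n ≤ i
    · rw [if_pos ⟨hc, hi, hgood⟩]
    · rw [if_neg (fun h => hc h.1), hvf_agree n (y n) i (lt_of_not_ge hc)]
  exact hx'notGn (hGmono m n hnm hx'Gm)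


end Stmt19

/-- Talagrand's characterization of meager ideals: `I` is meager iff there is
a strictly increasing σ such that any set containing infinitely many of the intervals
[σ(n), σ(n+1)) is not in `I`, iff `I` is F_σ-separated from the Fréchet filter. -/
theorem stmt_19 (I : Set (Set ℕ)) (hI : IsIdeal I) :
    (MeagerFamily I ↔
      ∃ σ : ℕ → ℕ, StrictMono σ ∧ ∀ S : Set ℕ,
        (∃ᶠ n in atTop, Set.Ico (σ n) (σ (n + 1)) ⊆ S) → S ∉ I) ∧
    ((∃ σ : ℕ → ℕ, StrictMono σ ∧ ∀ S : Set ℕ,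
        (∃ᶠ n in atTop, Set.Ico (σ n) (σ (n + 1)) ⊆ S) → S ∉ I) ↔
      ∃ F : ℕ → Set (ℕ → Bool), (∀ n, IsClosed (F n)) ∧ (chi '' I ⊆ ⋃ n, F n) ∧
        ∀ n, F n ∩ chi '' {S : Set ℕ | Sᶜ.Finite} = ∅) := by
  constructor
  · constructor
    · exact Stmt19.one_to_two I hI
    · rintro ⟨σ, hσ, hp⟩
      obtain ⟨F, h1, h2, h3⟩ := Stmt19.two_to_three I hσ hp
      exact Stmt19.three_to_one I h1 h2 h3
  · constructor
    · rintro ⟨σ, hσ, hp⟩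
      exact Stmt19.two_to_three I hσ hp
    · rintro ⟨F, h1, h2, h3⟩
      exact Stmt19.three_to_two I h1 h2 h3
end
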